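/- If K̃ is contractible (so all 𝔽₂-cohomology of K̃ in positive degrees vanishes and H⁰(K̃,𝔽₂) = 𝔽₂), then all entropy Betti numbers b_E^p(K) vanish. Consequently, a finite acyclic simplicial complex with infinite amenable fundamental group has Euler characteristic zero. -/
import Mathlib

set_option linter.unusedSectionVars false
set_option maxHeartbeats 1000000

open Filter Topology Pointwise

instance : TopologicalSpace (ZMod 2) := ⊥
instance : DiscreteTopology (ZMod 2) := ⟨rfl⟩

variable {G : Type*} [Group G] [DecidableEq G]

/-- Left translation action on functions. -/
def ltv (M : Type*) (γ : G) (f : G → M) : G → M := fun δ => f (γ⁻¹ * δ)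

/-- A `Γ`-invariant linear subspace. -/
def InvariantSub (M : Type*) [AddCommGroup M] [Module (ZMod 2) M]
    (W : Submodule (ZMod 2) (G → M)) : Prop :=
  ∀ γ : G, ∀ f ∈ W, ltv M γ f ∈ W

/-- The space of restrictions of elements of `W` to `Λ`. -/
noncomputable def resSpace {M : Type*} [AddCommGroup M] [Module (ZMod 2) M]
    (W : Submodule (ZMod 2) (G → M)) (Λ : Finset G) :
    Submodule (ZMod 2) (↥Λ → M) :=
  W.map (LinearMap.funLeft (ZMod 2) M (Subtype.val : ↥Λ → G))

/-- The entropy of a `Γ`-invariant linear subspace, along a Følner exhaustion. -/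
noncomputable def entropy {M : Type*} [AddCommGroup M] [Module (ZMod 2) M]
    (F : ℕ → Finset G) (W : Submodule (ZMod 2) (G → M)) : ℝ :=
  Filter.limsup
    (fun n => (Module.finrank (ZMod 2) ↥(resSpace W (F n)) : ℝ) / (F n).card) atTop

/-- `S` is a finite symmetric generating set containing `1`. -/
def SymmGen (S : Finset G) : Prop :=
  (1 : G) ∈ S ∧ (∀ s ∈ S, s⁻¹ ∈ S) ∧ Subgroup.closure (S : Set G) = ⊤

/-- A Følner exhaustion with respect to the word metric of `S`:
`S ^ r * F n` is the `r`-neighbourhood of `F n`. -/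
structure FolnerSeq (S : Finset G) (F : ℕ → Finset G) : Prop where
  one_mem : (1 : G) ∈ F 0
  mono : Monotone F
  exhaust : ∀ g : G, ∃ n, g ∈ F n
  folner : ∀ r : ℕ,
    Tendsto (fun n => (((S ^ r * F n) \ F n).card : ℝ) / (F n).card) atTop (𝓝 0)

variable (F : ℕ → Finset G)

/-- The `p`-th entropy Betti number of an equivariant cochain complex
`(Γ → 𝔽₂)^{k 0} → (Γ → 𝔽₂)^{k 1} → …`:
`b_E^p = h_Γ(Ker d_p) − h_Γ(Im d_{p−1})` (with `Im d_{−1} = 0`). -/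
noncomputable def bE
    (k : ℕ → ℕ)
    (d : ∀ p : ℕ, (G → Fin (k p) → ZMod 2) →ₗ[ZMod 2] (G → Fin (k (p + 1)) → ZMod 2))
    (p : ℕ) : ℝ :=
  entropy F (LinearMap.ker (d p)) -
    (match p with
     | 0 => 0
     | q + 1 => entropy F (LinearMap.range (d q)))

/-! ### Auxiliary material for the proof -/

section DimLemmas

variable {M : Type*} [AddCommGroup M] [Module (ZMod 2) M]

/-- Extension by zero, as a linear map. -/
noncomputable def extMap (Λ : Finset G) : (↥Λ → M) →ₗ[ZMod 2] (G → M) where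
  toFun h g := if hg : g ∈ Λ then h ⟨g, hg⟩ else 0
  map_add' h1 h2 := by funext g; by_cases hg : g ∈ Λ <;> simp [hg]
  map_smul' c h := by funext g; by_cases hg : g ∈ Λ <;> simp [hg]

lemma extMap_mem {Λ : Finset G} (h : ↥Λ → M) {g : G} (hg : g ∈ Λ) :
    extMap Λ h g = h ⟨g, hg⟩ := dif_pos hg

lemma extMap_notMem {Λ : Finset G} (h : ↥Λ → M) {g : G} (hg : g ∉ Λ) :
    extMap Λ h g = 0 := dif_neg hg

lemma funLeft_extMap {Λ : Finset G} (h : ↥Λ → M) :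
    LinearMap.funLeft (ZMod 2) M (Subtype.val : ↥Λ → G) (extMap Λ h) = h := by
  funext s
  exact (dif_pos s.2).trans (by congr)

lemma resSpace_subset (W : Submodule (ZMod 2) (G → M)) {Λ Λ' : Finset G} (h : Λ ⊆ Λ') :
    resSpace W Λ =
      (resSpace W Λ').map
        (LinearMap.funLeft (ZMod 2) M (fun x : ↥Λ => (⟨x.1, h x.2⟩ : ↥Λ'))) := by
  unfold resSpace
  rw [← Submodule.map_comp, ← LinearMap.funLeft_comp]
  rfl

lemma finrank_res_mono [Module.Finite (ZMod 2) M] (W : Submodule (ZMod 2) (G → M))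
    {Λ Λ' : Finset G} (h : Λ ⊆ Λ') :
    Module.finrank (ZMod 2) ↥(resSpace W Λ) ≤ Module.finrank (ZMod 2) ↥(resSpace W Λ') := by
  rw [resSpace_subset W h]
  exact Submodule.finrank_map_le _ _

lemma finrank_res_thicken [Module.Finite (ZMod 2) M] [Module.Free (ZMod 2) M]
    (W : Submodule (ZMod 2) (G → M)) {Λ Λ' : Finset G} (h : Λ ⊆ Λ') :
    Module.finrank (ZMod 2) ↥(resSpace W Λ') ≤
      Module.finrank (ZMod 2) ↥(resSpace W Λ) +
        Module.finrank (ZMod 2) M * (Λ' \ Λ).card := by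
  set ρ : (↥Λ' → M) →ₗ[ZMod 2] (↥Λ → M) :=
    LinearMap.funLeft (ZMod 2) M (fun x : ↥Λ => (⟨x.1, h x.2⟩ : ↥Λ')) with hρ
  set φ : ↥(resSpace W Λ') →ₗ[ZMod 2] (↥Λ → M) := ρ ∘ₗ (resSpace W Λ').subtype with hφ
  have hrange : LinearMap.range φ = resSpace W Λ := by
    rw [hφ, LinearMap.range_comp, Submodule.range_subtype, ← resSpace_subset W h]
  have hsub : (Λ' \ Λ : Finset G) ⊆ Λ' := Finset.sdiff_subset
  set ψ : ↥(LinearMap.ker φ) →ₗ[ZMod 2] (↥(Λ' \ Λ) → M) :=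
    (LinearMap.funLeft (ZMod 2) M (fun x : ↥(Λ' \ Λ) => (⟨x.1, hsub x.2⟩ : ↥Λ'))) ∘ₗ
      ((resSpace W Λ').subtype ∘ₗ (LinearMap.ker φ).subtype) with hψ
  have hinj : Function.Injective ψ := by
    intro x y hxy
    have hker : ∀ z : ↥(LinearMap.ker φ), ∀ b : ↥Λ, (z.1.1 : ↥Λ' → M) ⟨b.1, h b.2⟩ = 0 := by
      intro z b
      have := z.2
      rw [LinearMap.mem_ker] at this
      exact congrFun this b
    apply Subtype.ext; apply Subtype.ext; funext a
    by_cases ha : a.1 ∈ Λ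
    · rw [show a = (⟨(⟨a.1, ha⟩ : ↥Λ).1, h ha⟩ : ↥Λ') from Subtype.ext rfl]
      rw [hker x ⟨a.1, ha⟩, hker y ⟨a.1, ha⟩]
    · have ha' : a.1 ∈ Λ' \ Λ := Finset.mem_sdiff.2 ⟨a.2, ha⟩
      have := congrFun hxy ⟨a.1, ha'⟩
      simpa [hψ] using this
  have hkle : Module.finrank (ZMod 2) ↥(LinearMap.ker φ) ≤
      Module.finrank (ZMod 2) M * (Λ' \ Λ).card := by
    have hle := LinearMap.finrank_le_finrank_of_injective hinj
    calc Module.finrank (ZMod 2) ↥(LinearMap.ker φ)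
        ≤ Module.finrank (ZMod 2) (↥(Λ' \ Λ) → M) := hle
      _ = Module.finrank (ZMod 2) M * (Λ' \ Λ).card := by
          rw [Module.finrank_pi_fintype, Finset.sum_const, smul_eq_mul, mul_comm,
            Finset.card_univ, Fintype.card_coe]
  have hrn := LinearMap.finrank_range_add_finrank_ker φ
  rw [hrange] at hrn
  omega

end DimLemmas

section Gen

variable {S : Finset G}

lemma SymmGen.inv_eq (hS : SymmGen S) : S⁻¹ = S := by
  apply Finset.Subset.antisymm
  · intro a ha
    rw [Finset.mem_inv'] at ha
    have := hS.2.1 _ ha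
    simpa using this
  · intro a ha
    rw [Finset.mem_inv']
    exact hS.2.1 _ ha

lemma SymmGen.pow_inv_eq (hS : SymmGen S) (r : ℕ) : (S ^ r)⁻¹ = S ^ r := by
  rw [← inv_pow, hS.inv_eq]

lemma SymmGen.one_mem_pow (hS : SymmGen S) (r : ℕ) : (1 : G) ∈ S ^ r := by
  induction r with
  | zero => simp [Finset.mem_one]
  | succ m ih =>
    rw [pow_succ]
    simpa using Finset.mul_mem_mul ih hS.1

lemma SymmGen.pow_subset_pow (hS : SymmGen S) {r R : ℕ} (h : r ≤ R) : S ^ r ⊆ S ^ R := by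
  induction R with
  | zero => simpa [Nat.le_zero.mp h]
  | succ m ih =>
    rcases Nat.lt_or_ge r (m + 1) with hlt | hge
    · have h1 : S ^ r ⊆ S ^ m := ih (Nat.lt_succ_iff.mp hlt)
      intro g hg
      rw [pow_succ]
      have := Finset.mul_mem_mul (h1 hg) hS.1
      simpa using this
    · have : r = m + 1 := le_antisymm h hge
      subst this; exact Finset.Subset.refl _

lemma SymmGen.exists_mem_pow (hS : SymmGen S) (g : G) : ∃ r : ℕ, g ∈ S ^ r := by
  have hg : g ∈ Subgroup.closure (S : Set G) := by
    rw [hS.2.2]; exact Subgroup.mem_top g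
  induction hg using Subgroup.closure_induction with
  | mem x hx => exact ⟨1, by simpa using hx⟩
  | one => exact ⟨0, by simp [Finset.mem_one]⟩
  | mul x y hx hy ihx ihy =>
    obtain ⟨r1, h1⟩ := ihx
    obtain ⟨r2, h2⟩ := ihy
    exact ⟨r1 + r2, by rw [pow_add]; exact Finset.mul_mem_mul h1 h2⟩
  | inv x hx ihx =>
    obtain ⟨r, hr⟩ := ihx
    refine ⟨r, ?_⟩
    rw [← hS.pow_inv_eq r, Finset.mem_inv']
    simpa using hr

lemma SymmGen.finset_subset_pow (hS : SymmGen S) (I : Finset G) : ∃ r : ℕ, I ⊆ S ^ r := by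
  classical
  induction I using Finset.induction_on with
  | empty => exact ⟨0, by simp⟩
  | @insert a I ha ih =>
    obtain ⟨r, hr⟩ := ih
    obtain ⟨ra, hra⟩ := hS.exists_mem_pow a
    refine ⟨max r ra, ?_⟩
    intro g hg
    rcases Finset.mem_insert.mp hg with rfl | hgI
    · exact hS.pow_subset_pow (le_max_right _ _) hra
    · exact hS.pow_subset_pow (le_max_left _ _) (hr hgI)

end Gen

section Window

lemma exists_pow_window {a b : ℕ} {S : Finset G} (hS : SymmGen S)
    (d : (G → Fin a → ZMod 2) →ₗ[ZMod 2] (G → Fin b → ZMod 2))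
    (hc : Continuous d) (he : ∀ γ : G, ∀ f, d (ltv _ γ f) = ltv _ γ (d f)) :
    ∃ r : ℕ, ∀ (f : G → Fin a → ZMod 2) (g : G),
      (∀ t ∈ S ^ r, f (g * t) = 0) → d f g = 0 := by
  have hq : Continuous (fun f : G → Fin a → ZMod 2 => d f 1) := (continuous_apply 1).comp hc
  have hU : IsOpen ((fun f : G → Fin a → ZMod 2 => d f 1) ⁻¹' {0}) :=
    (isOpen_discrete _).preimage hq
  have h0 : (0 : G → Fin a → ZMod 2) ∈ (fun f : G → Fin a → ZMod 2 => d f 1) ⁻¹' {0} := by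
    simp
  obtain ⟨I, u, hIu, hsub⟩ := isOpen_pi_iff.mp hU 0 h0
  have hbase : ∀ f : G → Fin a → ZMod 2, (∀ t ∈ I, f t = 0) → d f 1 = 0 := by
    intro f hf
    have : f ∈ (↑I : Set G).pi u := by
      intro t ht
      rw [hf t ht]
      exact (hIu t ht).2
    exact hsub this
  obtain ⟨r, hr⟩ := hS.finset_subset_pow I
  refine ⟨r, ?_⟩
  intro f g hf
  have key : d f g = d (ltv _ g⁻¹ f) 1 := by
    rw [he g⁻¹ f]
    show d f g = d f (g⁻¹⁻¹ * 1)
    rw [inv_inv, mul_one]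
  rw [key]
  apply hbase
  intro t ht
  show f (g⁻¹⁻¹ * t) = 0
  rw [inv_inv]
  exact hf t (hr ht)

end Window

section Estimates

lemma finrank_pi_fin (Λ : Finset G) (a : ℕ) :
    Module.finrank (ZMod 2) (↥Λ → Fin a → ZMod 2) = Λ.card * a := by
  rw [Module.finrank_pi_fintype, Finset.sum_const, smul_eq_mul,
    Finset.card_univ, Fintype.card_coe, Module.finrank_fin_fun]

lemma card_sdiff_filter_le (Λ T : Finset G) :
    (Λ \ Λ.filter (fun g => ∀ t ∈ T, g * t ∈ Λ)).card ≤ T.card * ((Λ * T) \ Λ).card := by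
  classical
  have h1 : Λ \ Λ.filter (fun g => ∀ t ∈ T, g * t ∈ Λ) =
      Λ.filter (fun g => ¬ ∀ t ∈ T, g * t ∈ Λ) := (Finset.filter_not _ _).symm
  have h2 : Λ.filter (fun g => ¬ ∀ t ∈ T, g * t ∈ Λ) ⊆
      T.biUnion (fun t => Λ.filter (fun g => g * t ∉ Λ)) := by
    intro g hg
    obtain ⟨hgΛ, hgne⟩ := Finset.mem_filter.mp hg
    push_neg at hgne
    obtain ⟨t, ht, hgt⟩ := hgne
    exact Finset.mem_biUnion.2 ⟨t, ht, Finset.mem_filter.2 ⟨hgΛ, hgt⟩⟩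
  have h3 : ∀ t ∈ T, (Λ.filter (fun g => g * t ∉ Λ)).card ≤ ((Λ * T) \ Λ).card := by
    intro t ht
    have himg : (Λ.filter (fun g => g * t ∉ Λ)).image (· * t) ⊆ (Λ * T) \ Λ := by
      intro x hx
      obtain ⟨g, hg, rfl⟩ := Finset.mem_image.mp hx
      obtain ⟨hgΛ, hgt⟩ := Finset.mem_filter.mp hg
      exact Finset.mem_sdiff.2 ⟨Finset.mul_mem_mul hgΛ ht, hgt⟩
    calc (Λ.filter (fun g => g * t ∉ Λ)).card
        = ((Λ.filter (fun g => g * t ∉ Λ)).image (· * t)).card :=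
          (Finset.card_image_of_injective _ (mul_left_injective t)).symm
      _ ≤ ((Λ * T) \ Λ).card := Finset.card_le_card himg
  calc (Λ \ Λ.filter (fun g => ∀ t ∈ T, g * t ∈ Λ)).card
      = (Λ.filter (fun g => ¬ ∀ t ∈ T, g * t ∈ Λ)).card := by rw [h1]
    _ ≤ (T.biUnion (fun t => Λ.filter (fun g => g * t ∉ Λ))).card := Finset.card_le_card h2
    _ ≤ ∑ t ∈ T, (Λ.filter (fun g => g * t ∉ Λ)).card := Finset.card_biUnion_le
    _ ≤ T.card * ((Λ * T) \ Λ).card := by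
        calc ∑ t ∈ T, (Λ.filter (fun g => g * t ∉ Λ)).card
            ≤ ∑ _t ∈ T, ((Λ * T) \ Λ).card := Finset.sum_le_sum h3
          _ = T.card * ((Λ * T) \ Λ).card := by rw [Finset.sum_const, smul_eq_mul]

variable {a b : ℕ}

lemma win_congr (d : (G → Fin a → ZMod 2) →ₗ[ZMod 2] (G → Fin b → ZMod 2))
    {T : Finset G}
    (hwin : ∀ (f : G → Fin a → ZMod 2) (g : G), (∀ t ∈ T, f (g * t) = 0) → d f g = 0)
    (f₁ f₂ : G → Fin a → ZMod 2) (g : G)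
    (h : ∀ t ∈ T, f₁ (g * t) = f₂ (g * t)) : d f₁ g = d f₂ g := by
  have h0 := hwin (f₁ - f₂) g (by
    intro t ht
    have := h t ht
    simp [Pi.sub_apply, sub_eq_zero, this])
  rw [map_sub] at h0
  have h0' : d f₁ g - d f₂ g = 0 := h0
  rwa [sub_eq_zero] at h0'

lemma upper_est (d : (G → Fin a → ZMod 2) →ₗ[ZMod 2] (G → Fin b → ZMod 2))
    {T : Finset G}
    (hwin : ∀ (f : G → Fin a → ZMod 2) (g : G), (∀ t ∈ T, f (g * t) = 0) → d f g = 0)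
    (Λ : Finset G) :
    Module.finrank (ZMod 2) ↥(resSpace (LinearMap.ker d) Λ) +
      Module.finrank (ZMod 2) ↥(resSpace (LinearMap.range d) Λ) ≤
    Λ.card * a + b * (T.card * ((Λ * T) \ Λ).card) := by
  classical
  set B := Λ.filter (fun g => ∀ t ∈ T, g * t ∈ Λ) with hBdef
  have hBΛ : B ⊆ Λ := Finset.filter_subset _ _
  set D : (↥Λ → Fin a → ZMod 2) →ₗ[ZMod 2] (↥B → Fin b → ZMod 2) :=
    (LinearMap.funLeft (ZMod 2) _ (Subtype.val : ↥B → G)) ∘ₗ d ∘ₗ extMap Λ with hDdef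
  have key : ∀ (f : G → Fin a → ZMod 2) (s : ↥B),
      d (extMap Λ (LinearMap.funLeft (ZMod 2) _ (Subtype.val : ↥Λ → G) f)) s.1 = d f s.1 := by
    intro f s
    apply win_congr d hwin
    intro t ht
    have hmem : s.1 * t ∈ Λ := (Finset.mem_filter.mp s.2).2 t ht
    rw [extMap_mem _ hmem]
    rfl
  have claim1 : resSpace (LinearMap.ker d) Λ ≤ LinearMap.ker D := by
    rintro x ⟨f, hf, rfl⟩
    rw [LinearMap.mem_ker]
    funext s
    have hDs : D (LinearMap.funLeft (ZMod 2) _ (Subtype.val : ↥Λ → G) f) s =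
        d (extMap Λ (LinearMap.funLeft (ZMod 2) _ (Subtype.val : ↥Λ → G) f)) s.1 := rfl
    rw [hDs, key f s]
    have hf' : d f = 0 := hf
    rw [hf']
    rfl
  have claim2 : resSpace (LinearMap.range d) B ≤ LinearMap.range D := by
    rintro x ⟨u, ⟨f, rfl⟩, rfl⟩
    refine ⟨LinearMap.funLeft (ZMod 2) _ (Subtype.val : ↥Λ → G) f, ?_⟩
    funext s
    exact key f s
  have h1 : Module.finrank (ZMod 2) ↥(resSpace (LinearMap.ker d) Λ) ≤
      Module.finrank (ZMod 2) ↥(LinearMap.ker D) := Submodule.finrank_mono claim1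
  have h3 : Module.finrank (ZMod 2) ↥(resSpace (LinearMap.range d) B) ≤
      Module.finrank (ZMod 2) ↥(LinearMap.range D) := Submodule.finrank_mono claim2
  have h2 : Module.finrank (ZMod 2) ↥(resSpace (LinearMap.range d) Λ) ≤
      Module.finrank (ZMod 2) ↥(resSpace (LinearMap.range d) B) + b * (Λ \ B).card := by
    have := finrank_res_thicken (LinearMap.range d) hBΛ
    rwa [Module.finrank_fin_fun] at this
  have h4 := LinearMap.finrank_range_add_finrank_ker D
  rw [finrank_pi_fin] at h4
  have h5 : b * (Λ \ B).card ≤ b * (T.card * ((Λ * T) \ Λ).card) :=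
    Nat.mul_le_mul_left b (card_sdiff_filter_le Λ T)
  omega

lemma lower_est (d : (G → Fin a → ZMod 2) →ₗ[ZMod 2] (G → Fin b → ZMod 2))
    {T : Finset G} (h1T : (1 : G) ∈ T) (hTinv : T⁻¹ = T)
    (hwin : ∀ (f : G → Fin a → ZMod 2) (g : G), (∀ t ∈ T, f (g * t) = 0) → d f g = 0)
    (Λ : Finset G) :
    Λ.card * a ≤
      Module.finrank (ZMod 2) ↥(resSpace (LinearMap.ker d) Λ) +
        Module.finrank (ZMod 2) ↥(resSpace (LinearMap.range d) Λ) +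
          b * ((Λ * T) \ Λ).card := by
  classical
  have hΛsub : Λ ⊆ Λ * T := by
    intro g hg
    have := Finset.mul_mem_mul hg h1T
    rwa [mul_one] at this
  set E : (↥Λ → Fin a → ZMod 2) →ₗ[ZMod 2] (G → Fin b → ZMod 2) := d ∘ₗ extMap Λ with hEdef
  have hkerE : Module.finrank (ZMod 2) ↥(LinearMap.ker E) ≤
      Module.finrank (ZMod 2) ↥(resSpace (LinearMap.ker d) Λ) := by
    have hmem : ∀ c : ↥(LinearMap.ker E), (LinearMap.ker E).subtype c ∈
        resSpace (LinearMap.ker d) Λ := by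
      intro c
      refine ⟨extMap Λ c.1, ?_, funLeft_extMap c.1⟩
      show d (extMap Λ c.1) = 0
      exact c.2
    set j := LinearMap.codRestrict (resSpace (LinearMap.ker d) Λ)
      ((LinearMap.ker E).subtype) hmem with hj
    have hinj : Function.Injective j := by
      intro x y hxy
      have h2 : (j x).1 = (j y).1 := congrArg Subtype.val hxy
      exact Subtype.ext h2
    exact LinearMap.finrank_le_finrank_of_injective hinj
  have hranE : Module.finrank (ZMod 2) ↥(LinearMap.range E) ≤
      Module.finrank (ZMod 2) ↥(resSpace (LinearMap.range d) (Λ * T)) := by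
    have hmem : ∀ c : ↥(LinearMap.range E),
        (LinearMap.funLeft (ZMod 2) _ (Subtype.val : ↥(Λ * T) → G))
          ((LinearMap.range E).subtype c) ∈ resSpace (LinearMap.range d) (Λ * T) := by
      intro c
      obtain ⟨h, hh⟩ := c.2
      exact ⟨c.1, ⟨extMap Λ h, hh⟩, rfl⟩
    set ρ := LinearMap.codRestrict (resSpace (LinearMap.range d) (Λ * T))
      ((LinearMap.funLeft (ZMod 2) _ (Subtype.val : ↥(Λ * T) → G)) ∘ₗ
        (LinearMap.range E).subtype) hmem with hρ
    have hzero : ∀ c : ↥(LinearMap.range E), ∀ g : G, g ∉ Λ * T → c.1 g = 0 := by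
      intro c g hg
      obtain ⟨h, hh⟩ := c.2
      rw [← hh]
      show d (extMap Λ h) g = 0
      apply hwin
      intro t ht
      apply extMap_notMem
      intro hmem'
      apply hg
      have htinv : t⁻¹ ∈ T := by
        rw [← hTinv, Finset.mem_inv']
        simpa using ht
      have := Finset.mul_mem_mul hmem' htinv
      rwa [mul_assoc, mul_inv_cancel, mul_one] at this
    have hinj : Function.Injective ρ := by
      intro x y hxy
      apply Subtype.ext
      have hval : (ρ x).1 = (ρ y).1 := congrArg Subtype.val hxy
      funext g
      by_cases hg : g ∈ Λ * T
      · exact congrFun hval ⟨g, hg⟩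
      · rw [hzero x g hg, hzero y g hg]
    exact LinearMap.finrank_le_finrank_of_injective hinj
  have hthick : Module.finrank (ZMod 2) ↥(resSpace (LinearMap.range d) (Λ * T)) ≤
      Module.finrank (ZMod 2) ↥(resSpace (LinearMap.range d) Λ) + b * ((Λ * T) \ Λ).card := by
    have := finrank_res_thicken (LinearMap.range d) hΛsub
    rwa [Module.finrank_fin_fun] at this
  have h4 := LinearMap.finrank_range_add_finrank_ker E
  rw [finrank_pi_fin] at h4
  omega

end Estimates

/-- If `K̃` is contractible — so the `𝔽₂`-cohomology of its cochain
complex vanishes in positive degrees and `H⁰(K̃,𝔽₂) = 𝔽₂` — then all entropy Betti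
numbers `b_E^p(K)` vanish; consequently a finite acyclic simplicial complex with
infinite amenable fundamental group has Euler characteristic zero. -/
theorem entropy_betti_vanish_of_contractible [Infinite G]
    (S : Finset G) (hS : SymmGen S) (hF : FolnerSeq S F)
    (n : ℕ) (k : ℕ → ℕ) (hk : ∀ p, n < p → k p = 0)
    (d : ∀ p : ℕ, (G → Fin (k p) → ZMod 2) →ₗ[ZMod 2] (G → Fin (k (p + 1)) → ZMod 2))
    (hdcont : ∀ p, Continuous (d p))
    (hdequi : ∀ p, ∀ γ : G, ∀ f, d p (ltv _ γ f) = ltv _ γ (d p f))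
    (hdd : ∀ p, ∀ f, d (p + 1) (d p f) = 0)
    -- contractibility: vanishing of cohomology in positive degrees …
    (hexact : ∀ p, LinearMap.ker (d (p + 1)) = LinearMap.range (d p))
    -- … and `H⁰(K̃,𝔽₂) = 𝔽₂`
    (hH0 : Module.finrank (ZMod 2) ↥(LinearMap.ker (d 0)) = 1) :
    (∀ p ≤ n, bE F k d p = 0) ∧
      ∑ p ∈ Finset.range (n + 1), (-1 : ℝ) ^ p * (k p : ℝ) = 0 := by
  classical
  -- basic facts about the Følner sequence
  have hsubF : ∀ A : Finset G, ∃ m, A ⊆ F m := by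
    intro A
    induction A using Finset.induction_on with
    | empty => exact ⟨0, by simp⟩
    | @insert g A hg ih =>
      obtain ⟨m, hm⟩ := ih
      obtain ⟨mg, hmg⟩ := hF.exhaust g
      refine ⟨max m mg, ?_⟩
      intro x hx
      rcases Finset.mem_insert.mp hx with rfl | hxA
      · exact hF.mono (le_max_right _ _) hmg
      · exact hF.mono (le_max_left _ _) (hm hxA)
  have hcardtop : Tendsto (fun m => (F m).card) atTop atTop := by
    refine tendsto_atTop_atTop.2 (fun N => ?_)
    obtain ⟨s, hs⟩ := Infinite.exists_subset_card_eq G N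
    obtain ⟨m0, hm0⟩ := hsubF s
    exact ⟨m0, fun m hm => hs ▸ Finset.card_le_card (hm0.trans (hF.mono hm))⟩
  have hinv : Tendsto (fun m => 1 / ((F m).card : ℝ)) atTop (𝓝 0) :=
    tendsto_one_div_atTop_nhds_zero_nat.comp hcardtop
  have hcard : ∀ m : ℕ, 0 < ((F m).card : ℝ) := by
    intro m
    have h1 : (1 : G) ∈ F m := hF.mono (Nat.zero_le m) hF.one_mem
    exact_mod_cast Finset.card_pos.2 ⟨1, h1⟩
  -- the restriction of the kernel in degree 0 has dimension at most 1
  haveI : Module.Finite (ZMod 2) ↥(LinearMap.ker (d 0)) :=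
    FiniteDimensional.of_finrank_eq_succ hH0
  have hX0 : ∀ Λ : Finset G,
      Module.finrank (ZMod 2) ↥(resSpace (LinearMap.ker (d 0)) Λ) ≤ 1 := by
    intro Λ
    calc Module.finrank (ZMod 2) ↥(resSpace (LinearMap.ker (d 0)) Λ)
        ≤ Module.finrank (ZMod 2) ↥(LinearMap.ker (d 0)) := Submodule.finrank_map_le _ _
      _ = 1 := hH0
  -- vanishing in top degree
  have hXtop : ∀ Λ : Finset G,
      Module.finrank (ZMod 2) ↥(resSpace (LinearMap.ker (d (n + 1))) Λ) = 0 := by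
    intro Λ
    have hk1 : k (n + 1) = 0 := hk _ (lt_add_one n)
    haveI : IsEmpty (Fin (k (n + 1))) := by rw [hk1]; infer_instance
    haveI : Subsingleton (↥Λ → Fin (k (n + 1)) → ZMod 2) := by infer_instance
    exact Module.finrank_zero_of_subsingleton
  -- entropy of the degree-0 kernel vanishes
  have hone : entropy F (LinearMap.ker (d 0)) = 0 := by
    have hlim : Tendsto
        (fun m => (Module.finrank (ZMod 2) ↥(resSpace (LinearMap.ker (d 0)) (F m)) : ℝ) /
          ((F m).card : ℝ)) atTop (𝓝 0) := by
      apply tendsto_of_tendsto_of_tendsto_of_le_of_le tendsto_const_nhds hinv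
      · intro m
        positivity
      · intro m
        have hb : (Module.finrank (ZMod 2) ↥(resSpace (LinearMap.ker (d 0)) (F m)) : ℝ) ≤ 1 := by
          exact_mod_cast hX0 (F m)
        exact div_le_div_of_nonneg_right hb (hcard m).le
    exact hlim.limsup_eq
  constructor
  · -- all entropy Betti numbers vanish
    intro p _
    match p with
    | 0 =>
      show entropy F (LinearMap.ker (d 0)) - 0 = 0
      rw [hone, sub_zero]
    | q + 1 =>
      show entropy F (LinearMap.ker (d (q + 1))) - entropy F (LinearMap.range (d q)) = 0
      rw [hexact q, sub_self]
  · -- Euler characteristic vanishes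
    set c : ℝ := ∑ p ∈ Finset.range (n + 1), (-1 : ℝ) ^ p * (k p : ℝ) with hc
    -- choose a common symmetric window
    choose r hr using fun p => exists_pow_window hS (d p) (hdcont p) (hdequi p)
    set R := (Finset.range (n + 1)).sup r with hRdef
    set T := S ^ R with hTdef
    have h1T : (1 : G) ∈ T := hS.one_mem_pow R
    have hTinv : T⁻¹ = T := hS.pow_inv_eq R
    have hwin : ∀ p, p ≤ n → ∀ (f : G → Fin (k p) → ZMod 2) (g : G),
        (∀ t ∈ T, f (g * t) = 0) → d p f g = 0 := by
      intro p hp f g h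
      apply hr p f g
      intro t ht
      exact h t (hS.pow_subset_pow (Finset.le_sup (Finset.mem_range.2 (by omega))) ht)
    set Cst : ℝ := (∑ p ∈ Finset.range (n + 1), (k (p + 1) : ℝ)) * ((T.card : ℝ) + 1)
      with hCst
    have hCst0 : 0 ≤ Cst := by
      apply mul_nonneg
      · exact Finset.sum_nonneg (fun p _ => Nat.cast_nonneg _)
      · positivity
    -- the key finite-scale estimate
    have key : ∀ m : ℕ, |c| * ((F m).card : ℝ) ≤
        Cst * (((S ^ R * F m) \ F m).card : ℝ) + 1 := by
      intro m
      set Λ : Finset G := (F m)⁻¹ with hΛdef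
      set δ : ℝ := (((S ^ R * F m) \ F m).card : ℝ) with hδdef
      have hδ0 : 0 ≤ δ := by positivity
      have hsdiffinv : ∀ X Y : Finset G, (X \ Y)⁻¹ = X⁻¹ \ Y⁻¹ := by
        intro X Y
        ext a
        simp [Finset.mem_inv', Finset.mem_sdiff]
      have hcards : (((Λ * T) \ Λ).card : ℝ) = δ := by
        have : ((Λ * T) \ Λ).card = ((S ^ R * F m) \ F m).card := by
          calc ((Λ * T) \ Λ).card = (((Λ * T) \ Λ)⁻¹).card := (Finset.card_inv _).symm
            _ = ((S ^ R * F m) \ F m).card := by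
                rw [hsdiffinv, mul_inv_rev, hΛdef, hTdef, hS.pow_inv_eq, inv_inv]
        rw [hδdef]
        exact_mod_cast this
      have hcardΛ : Λ.card = (F m).card := Finset.card_inv _
      set A : ℕ → ℝ := fun p =>
        (Module.finrank (ZMod 2) ↥(resSpace (LinearMap.ker (d p)) Λ) : ℝ) with hA
      have hA0 : ∀ p, 0 ≤ A p := fun p => Nat.cast_nonneg _
      have hAtop : A (n + 1) = 0 := by
        rw [hA]
        simp [hXtop Λ]
      have hA0le : A 0 ≤ 1 := by
        simp only [hA]
        exact_mod_cast hX0 Λ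
      -- per-degree two-sided estimates
      have hest : ∀ p ∈ Finset.range (n + 1),
          |((F m).card : ℝ) * (k p : ℝ) - (A p + A (p + 1))| ≤
            (k (p + 1) : ℝ) * ((T.card : ℝ) + 1) * δ := by
        intro p hp
        have hp' : p ≤ n := by
          have := Finset.mem_range.mp hp
          omega
        have hU := upper_est (d p) (hwin p hp') Λ
        have hL := lower_est (d p) h1T hTinv (hwin p hp') Λ
        rw [← hexact p] at hU hL
        rw [hcardΛ] at hU hL
        have hUr : A p + A (p + 1) ≤ ((F m).card : ℝ) * (k p : ℝ) +
            (k (p + 1) : ℝ) * ((T.card : ℝ) * (((Λ * T) \ Λ).card : ℝ)) := by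
          simp only [hA]
          exact_mod_cast hU
        have hLr : ((F m).card : ℝ) * (k p : ℝ) ≤ A p + A (p + 1) +
            (k (p + 1) : ℝ) * (((Λ * T) \ Λ).card : ℝ) := by
          simp only [hA]
          exact_mod_cast hL
        rw [hcards] at hUr hLr
        rw [abs_le]
        constructor
        · nlinarith [mul_nonneg (Nat.cast_nonneg (k (p + 1)) : (0:ℝ) ≤ (k (p+1) : ℝ)) hδ0]
        · nlinarith [mul_nonneg (mul_nonneg
            (Nat.cast_nonneg (k (p + 1)) : (0:ℝ) ≤ (k (p+1) : ℝ))
            (Nat.cast_nonneg T.card : (0:ℝ) ≤ (T.card : ℝ))) hδ0]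
      -- telescoping
      have htel : ∑ p ∈ Finset.range (n + 1),
          ((-1 : ℝ) ^ p * A p - (-1 : ℝ) ^ (p + 1) * A (p + 1)) = A 0 := by
        rw [Finset.sum_range_sub' (fun p => (-1 : ℝ) ^ p * A p)]
        simp [hAtop]
      have hsum : c * ((F m).card : ℝ) =
          ∑ p ∈ Finset.range (n + 1), (-1 : ℝ) ^ p * ((k p : ℝ) * ((F m).card : ℝ)) := by
        rw [hc, Finset.sum_mul]
        exact Finset.sum_congr rfl (fun p _ => by ring)
      have hdiff : c * ((F m).card : ℝ) - A 0 =
          ∑ p ∈ Finset.range (n + 1),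
            (-1 : ℝ) ^ p * (((F m).card : ℝ) * (k p : ℝ) - (A p + A (p + 1))) := by
        rw [hsum, ← htel, ← Finset.sum_sub_distrib]
        exact Finset.sum_congr rfl (fun p _ => by ring)
      have habs : |c * ((F m).card : ℝ) - A 0| ≤ Cst * δ := by
        rw [hdiff]
        calc |∑ p ∈ Finset.range (n + 1),
              (-1 : ℝ) ^ p * (((F m).card : ℝ) * (k p : ℝ) - (A p + A (p + 1)))|
            ≤ ∑ p ∈ Finset.range (n + 1),
              |(-1 : ℝ) ^ p * (((F m).card : ℝ) * (k p : ℝ) - (A p + A (p + 1)))| :=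
              Finset.abs_sum_le_sum_abs _ _
          _ ≤ ∑ p ∈ Finset.range (n + 1), (k (p + 1) : ℝ) * ((T.card : ℝ) + 1) * δ := by
              refine Finset.sum_le_sum (fun p hp => ?_)
              rw [abs_mul]
              have h1 : |(-1 : ℝ) ^ p| = 1 := by simp
              rw [h1, one_mul]
              exact hest p hp
          _ = Cst * δ := by
              rw [hCst, ← Finset.sum_mul, ← Finset.sum_mul]
      have htri : |c * ((F m).card : ℝ)| ≤ |c * ((F m).card : ℝ) - A 0| + |A 0| := by
        have := abs_add_le (c * ((F m).card : ℝ) - A 0) (A 0)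
        simpa using this
      have hAabs : |A 0| = A 0 := abs_of_nonneg (hA0 0)
      have hfin : |c| * ((F m).card : ℝ) = |c * ((F m).card : ℝ)| := by
        rw [abs_mul, abs_of_nonneg (le_of_lt (hcard m))]
      rw [hfin]
      calc |c * ((F m).card : ℝ)| ≤ |c * ((F m).card : ℝ) - A 0| + |A 0| := htri
        _ ≤ Cst * δ + A 0 := by rw [hAabs]; exact add_le_add habs le_rfl
        _ ≤ Cst * δ + 1 := by linarith [hA0le]
    -- pass to the limit
    have hw : Tendsto (fun m => Cst * ((((S ^ R * F m) \ F m).card : ℝ) / ((F m).card : ℝ))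
        + 1 / ((F m).card : ℝ)) atTop (𝓝 0) := by
      have h1 := (hF.folner R).const_mul Cst
      have h2 := h1.add hinv
      simpa using h2
    have hle : ∀ m : ℕ, |c| ≤
        Cst * ((((S ^ R * F m) \ F m).card : ℝ) / ((F m).card : ℝ)) + 1 / ((F m).card : ℝ) := by
      intro m
      have hkey := key m
      have h1 : |c| ≤ (Cst * (((S ^ R * F m) \ F m).card : ℝ) + 1) / ((F m).card : ℝ) :=
        (le_div_iff₀ (hcard m)).2 hkey
      calc |c| ≤ (Cst * (((S ^ R * F m) \ F m).card : ℝ) + 1) / ((F m).card : ℝ) := h1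
        _ = Cst * ((((S ^ R * F m) \ F m).card : ℝ) / ((F m).card : ℝ))
            + 1 / ((F m).card : ℝ) := by
            rw [add_div, mul_div_assoc]
    have hfinal : |c| ≤ 0 := ge_of_tendsto' hw hle
    have : |c| = 0 := le_antisymm hfinal (abs_nonneg c)
    rwa [abs_eq_zero] at this
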